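/- Let gᵢⱼ be a positive-definite symmetric matrix, lᵢ = gᵢⱼyʲ/L with L² = gᵢⱼyⁱyʲ, and bᵢ a covector with b² = gⁱʲbᵢbⱼ, β = bᵢyⁱ > 0, τ = L/β, and suppose 2τ² − ρτ³ ≠ 0 and 2b²τ − ρ ≠ 0. Then the matrix *gᵢⱼ = (2τ²−ρτ³)gᵢⱼ + 3τ⁴bᵢbⱼ − 4τ³(lᵢbⱼ+bᵢlⱼ) + (4τ²+ρτ³)lᵢlⱼ has inverse *gⁱʲ = (2τ²−ρτ³)⁻¹ [ gⁱʲ − (2τ/(2b²τ−ρ)) bⁱbʲ + ((4−ρτ)/(2b²τ−ρ))(lⁱbʲ + bⁱlʲ) − ((3ρb²τ³ − ρ²τ² − 4b²τ² − 2ρτ + 8)/(τ(2b²τ−ρ))) lⁱlʲ ], where indices are raised with gⁱʲ. -/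

import Mathlib

open scoped BigOperators

/-- The inverse of the Kropina-changed metric tensor: with
`*gᵢⱼ = (2τ²−ρτ³)gᵢⱼ + 3τ⁴bᵢbⱼ − 4τ³(lᵢbⱼ+bᵢlⱼ) + (4τ²+ρτ³)lᵢlⱼ`, one has
`*gⁱʲ = (2τ²−ρτ³)⁻¹ [gⁱʲ − (2τ/(2b²τ−ρ)) bⁱbʲ + ((4−ρτ)/(2b²τ−ρ))(lⁱbʲ+bⁱlʲ)
 − ((3ρb²τ³−ρ²τ²−4b²τ²−2ρτ+8)/(τ(2b²τ−ρ))) lⁱlʲ]`. -/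
theorem kropina_inverse_metric
    {n : ℕ} (g : Matrix (Fin n) (Fin n) ℝ) (hg : g.PosDef)
    (hgsym : g.IsSymm)
    (y : Fin n → ℝ) (bb : Fin n → ℝ) (L ρ : ℝ)
    (hL : L ^ 2 = ∑ i, ∑ j, g i j * y i * y j) (hLpos : 0 < L)
    (l : Fin n → ℝ) (hl : ∀ i, l i = (∑ j, g i j * y j) / L)
    (bup lup : Fin n → ℝ)
    (hbup : ∀ i, bup i = ∑ j, g⁻¹ i j * bb j)
    (hlup : ∀ i, lup i = ∑ j, g⁻¹ i j * l j)
    (bsq : ℝ) (hbsq : bsq = ∑ i, ∑ j, g⁻¹ i j * bb i * bb j)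
    (β : ℝ) (hβ : β = ∑ i, bb i * y i) (hβpos : 0 < β)
    (τ : ℝ) (hτ : τ = L / β)
    (h1 : 2 * τ ^ 2 - ρ * τ ^ 3 ≠ 0) (h2 : 2 * bsq * τ - ρ ≠ 0)
    (gstar : Matrix (Fin n) (Fin n) ℝ)
    (hgstar : ∀ i j, gstar i j =
      (2 * τ ^ 2 - ρ * τ ^ 3) * g i j + 3 * τ ^ 4 * bb i * bb j
        - 4 * τ ^ 3 * (l i * bb j + bb i * l j)
        + (4 * τ ^ 2 + ρ * τ ^ 3) * l i * l j)
    (gstarInv : Matrix (Fin n) (Fin n) ℝ)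
    (hgstarInv : ∀ i j, gstarInv i j =
      (2 * τ ^ 2 - ρ * τ ^ 3)⁻¹ *
        (g⁻¹ i j - (2 * τ / (2 * bsq * τ - ρ)) * bup i * bup j
          + ((4 - ρ * τ) / (2 * bsq * τ - ρ)) * (lup i * bup j + bup i * lup j)
          - ((3 * ρ * bsq * τ ^ 3 - ρ ^ 2 * τ ^ 2 - 4 * bsq * τ ^ 2 - 2 * ρ * τ + 8)
              / (τ * (2 * bsq * τ - ρ))) * lup i * lup j)) :
    ∀ i k, (∑ j, gstarInv i j * gstar j k) = if i = k then 1 else 0 := by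
  have hLne : L ≠ 0 := ne_of_gt hLpos
  have hβne : β ≠ 0 := ne_of_gt hβpos
  have hτ0 : τ ≠ 0 := by
    intro h
    exact h1 (by rw [h]; ring)
  have hdet : IsUnit g.det := isUnit_iff_ne_zero.mpr (ne_of_gt hg.det_pos)
  have hGi : g⁻¹ * g = 1 := Matrix.nonsing_inv_mul g hdet
  have hiG : g * g⁻¹ = 1 := Matrix.mul_nonsing_inv g hdet
  have hsym : ∀ a b, g a b = g b a := by
    intro a b
    conv_lhs => rw [← hgsym.eq]
    simp [Matrix.transpose_apply]
  have hinvsym : ∀ a b, g⁻¹ a b = g⁻¹ b a := by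
    intro a b
    have h' : (g⁻¹).transpose = g⁻¹ := by
      rw [Matrix.transpose_nonsing_inv, hgsym.eq]
    conv_lhs => rw [← h']
    simp [Matrix.transpose_apply]
  have hIG : ∀ a b, (∑ j, g⁻¹ a j * g j b) = if a = b then 1 else 0 := by
    intro a b
    have := congrFun (congrFun hGi a) b
    simpa [Matrix.mul_apply, Matrix.one_apply] using this
  -- lup is y / L
  have hlup' : ∀ i, lup i = y i / L := by
    intro i
    rw [hlup]
    calc ∑ j, g⁻¹ i j * l j
        = ∑ j, ∑ p, g⁻¹ i j * g j p * y p / L := by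
          refine Finset.sum_congr rfl fun j _ => ?_
          rw [hl, ← mul_div_assoc, Finset.mul_sum, Finset.sum_div]
          exact Finset.sum_congr rfl fun p _ => by ring
      _ = ∑ p, (∑ j, g⁻¹ i j * g j p) * y p / L := by
          rw [Finset.sum_comm]
          exact Finset.sum_congr rfl fun p _ => by
            rw [Finset.sum_mul, Finset.sum_div]
      _ = ∑ p, (if i = p then 1 else 0) * y p / L := by
          exact Finset.sum_congr rfl fun p _ => by rw [hIG]
      _ = y i / L := by rw [← Finset.sum_div]; simp
  -- the nine contraction identities
  have hT2 : ∀ i, (∑ j, g⁻¹ i j * bb j) = bup i := fun i => (hbup i).symm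
  have hT3 : ∀ i, (∑ j, g⁻¹ i j * l j) = lup i := fun i => (hlup i).symm
  have hT4 : ∀ k, (∑ j, bup j * g j k) = bb k := by
    intro k
    calc ∑ j, bup j * g j k
        = ∑ j, ∑ m, g⁻¹ m j * g j k * bb m := by
          refine Finset.sum_congr rfl fun j _ => ?_
          rw [hbup, Finset.sum_mul]
          exact Finset.sum_congr rfl fun m _ => by rw [hinvsym j m]; ring
      _ = ∑ m, (∑ j, g⁻¹ m j * g j k) * bb m := by
          rw [Finset.sum_comm]
          exact Finset.sum_congr rfl fun m _ => by rw [Finset.sum_mul]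
      _ = ∑ m, (if m = k then 1 else 0) * bb m := by
          exact Finset.sum_congr rfl fun m _ => by rw [hIG]
      _ = bb k := by simp
  have hT5 : ∀ k, (∑ j, lup j * g j k) = l k := by
    intro k
    rw [hl, Finset.sum_div]
    refine Finset.sum_congr rfl fun j _ => ?_
    rw [hlup', hsym k j]
    ring
  have hT6 : (∑ j, bup j * bb j) = bsq := by
    rw [hbsq]
    refine Finset.sum_congr rfl fun j _ => ?_
    rw [hbup, Finset.sum_mul]
    exact Finset.sum_congr rfl fun m _ => by ring
  have hT8 : (∑ j, lup j * bb j) = τ⁻¹ := by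
    have : (∑ j, lup j * bb j) = β / L := by
      rw [hβ, Finset.sum_div]
      exact Finset.sum_congr rfl fun j _ => by rw [hlup']; ring
    rw [this, hτ]
    field_simp
  have hT7 : (∑ j, bup j * l j) = τ⁻¹ := by
    have : (∑ j, bup j * l j) = ∑ j, lup j * bb j := by
      calc ∑ j, bup j * l j
          = ∑ j, ∑ m, g⁻¹ m j * l j * bb m := by
            refine Finset.sum_congr rfl fun j _ => ?_
            rw [hbup, Finset.sum_mul]
            exact Finset.sum_congr rfl fun m _ => by rw [hinvsym j m]; ring
        _ = ∑ m, (∑ j, g⁻¹ m j * l j) * bb m := by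
            rw [Finset.sum_comm]
            exact Finset.sum_congr rfl fun m _ => by rw [Finset.sum_mul]
        _ = ∑ m, lup m * bb m := by
            exact Finset.sum_congr rfl fun m _ => by rw [hT3]
    rw [this, hT8]
  have hT9 : (∑ j, lup j * l j) = 1 := by
    have hsum : (∑ j, lup j * l j) = (∑ j, ∑ p, g j p * y j * y p) / L ^ 2 := by
      rw [Finset.sum_div]
      refine Finset.sum_congr rfl fun j _ => ?_
      rw [hlup', hl, Finset.sum_div, Finset.sum_div, Finset.mul_sum]
      refine Finset.sum_congr rfl fun p _ => ?_
      field_simp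
    rw [hsum, ← hL]
    field_simp
  -- main computation
  intro i k
  have expand : ∀ j, gstarInv i j * gstar j k = (2 * τ ^ 2 - ρ * τ ^ 3)⁻¹ * (
      (2 * τ ^ 2 - ρ * τ ^ 3) * (g⁻¹ i j * g j k)
    + (3 * τ ^ 4 * bb k - 4 * τ ^ 3 * l k) * (g⁻¹ i j * bb j)
    + (-(4 * τ ^ 3) * bb k + (4 * τ ^ 2 + ρ * τ ^ 3) * l k) * (g⁻¹ i j * l j)
    + ((-(2 * τ / (2 * bsq * τ - ρ))) * bup i
        + ((4 - ρ * τ) / (2 * bsq * τ - ρ)) * lup i) *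
        ((2 * τ ^ 2 - ρ * τ ^ 3) * (bup j * g j k)
          + (3 * τ ^ 4 * bb k - 4 * τ ^ 3 * l k) * (bup j * bb j)
          + (-(4 * τ ^ 3) * bb k + (4 * τ ^ 2 + ρ * τ ^ 3) * l k) * (bup j * l j))
    + (((4 - ρ * τ) / (2 * bsq * τ - ρ)) * bup i
        - ((3 * ρ * bsq * τ ^ 3 - ρ ^ 2 * τ ^ 2 - 4 * bsq * τ ^ 2 - 2 * ρ * τ + 8)
            / (τ * (2 * bsq * τ - ρ))) * lup i) *
        ((2 * τ ^ 2 - ρ * τ ^ 3) * (lup j * g j k)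
          + (3 * τ ^ 4 * bb k - 4 * τ ^ 3 * l k) * (lup j * bb j)
          + (-(4 * τ ^ 3) * bb k + (4 * τ ^ 2 + ρ * τ ^ 3) * l k) * (lup j * l j))) := by
    intro j
    rw [hgstarInv, hgstar]
    ring
  rw [Finset.sum_congr rfl fun j _ => expand j]
  simp only [← Finset.mul_sum, Finset.sum_add_distrib]
  rw [hIG i k, hT2 i, hT3 i, hT4 k, hT5 k, hT6, hT7, hT8, hT9]
  have h1' : 2 - τ * ρ ≠ 0 := by
    intro h; apply h1; linear_combination τ ^ 2 * h
  have h2' : τ * bsq * 2 - ρ ≠ 0 := by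
    intro h; apply h2; linear_combination h
  rcases eq_or_ne i k with h | h
  · simp only [h, if_pos rfl, if_true]
    field_simp [h1', h2']
    linear_combination (-(τ * l k * lup k * 4 + τ ^ 2 * ρ * l k * lup k - τ ^ 2 * bb k * lup k * 4 - τ ^ 2 * l k * bup k * 4 + τ ^ 3 * bb k * bup k * 3)) * mul_inv_cancel₀ h2'
  · simp only [if_neg h]
    field_simp [h1', h2']
    linear_combination (-(τ * l k * lup i * 4 + τ ^ 2 * ρ * l k * lup i - τ ^ 2 * bb k * lup i * 4 - τ ^ 2 * l k * bup i * 4 + τ ^ 3 * bb k * bup i * 3)) * mul_inv_cancel₀ h2'
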